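/- Let 1 ≤ ℓ < k ≤ n/2. For i = 2,…,ℓ−1 one has (θ_{i+1}^{k,ℓ} / θ_i^{k,ℓ})² = q^{2i−k−ℓ}(q^{k−i}−1)(q^{ℓ−i}−1) / ((q^{n−k−i}−1)(q^{n−ℓ−i}−1)), and this quantity is strictly less than 1. -/

import Mathlib

/-- The Gaussian binomial coefficient `[a choose b]_q`, as a real number:
`∏_{i=0}^{b-1} (q^(a-i)-1)/(q^(b-i)-1)` for `a, b ≥ 0`, and `0` if `a < 0` or `b < 0`. -/
noncomputable def gbinom (q : ℝ) (a b : ℤ) : ℝ :=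
  if 0 ≤ a ∧ 0 ≤ b then
    ∏ i ∈ Finset.range b.toNat, (q ^ (a - i) - 1) / (q ^ (b - i) - 1)
  else 0

/-- The eigenvalue
`θ_i^{k,ℓ} = (-1)^i q^{C(i,2) + kℓ - i(k+ℓ)/2} [n-k-i choose ℓ-i] [n-2i choose k-i]^{1/2}
[n-2i choose ℓ-i]^{-1/2}` for `i ≤ k ≤ n - i`, and `0` if `k < i` or `k > n - i`.
(The half-integer power of `q` is expressed via `√q`.) -/
noncomputable def theta (q : ℝ) (n i k l : ℕ) : ℝ :=
  if i ≤ k ∧ k ≤ n - i then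
    (-1) ^ i * (Real.sqrt q) ^ ((i * (i - 1) : ℤ) + 2 * k * l - i * (k + l)) *
      gbinom q ((n : ℤ) - k - i) ((l : ℤ) - i) *
      Real.sqrt (gbinom q ((n : ℤ) - 2 * i) ((k : ℤ) - i)) *
      (Real.sqrt (gbinom q ((n : ℤ) - 2 * i) ((l : ℤ) - i)))⁻¹
  else 0

lemma zpow_sub_one_pos {q : ℝ} (hq : 1 < q) {m : ℤ} (hm : 1 ≤ m) : 0 < q ^ m - 1 :=
  sub_pos.mpr (one_lt_zpow₀ hq hm)

lemma gbinom_pos {q : ℝ} (hq : 1 < q) {a b : ℤ} (hb : 0 ≤ b) (hab : b ≤ a) :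
    0 < gbinom q a b := by
  rw [gbinom, if_pos ⟨hb.trans hab, hb⟩]
  refine Finset.prod_pos fun j hj => ?_
  have hj' : (j : ℤ) < b := by
    have := Finset.mem_range.mp hj
    omega
  exact div_pos (zpow_sub_one_pos hq (by omega)) (zpow_sub_one_pos hq (by omega))

lemma gbinom_zero {q : ℝ} {a : ℤ} (ha : 0 ≤ a) : gbinom q a 0 = 1 := by
  rw [gbinom, if_pos ⟨ha, le_refl 0⟩]; simp

lemma gbinom_row {q : ℝ} (a : ℤ) (ha : 1 ≤ a) (B : ℕ) :
    gbinom q a ((B : ℤ) + 1) =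
      (q ^ a - 1) / (q ^ ((B : ℤ) + 1) - 1) * gbinom q (a - 1) B := by
  rw [gbinom, gbinom, if_pos ⟨by omega, by omega⟩, if_pos ⟨by omega, by omega⟩]
  have h1 : ((B : ℤ) + 1).toNat = B + 1 := by omega
  have h2 : ((B : ℤ)).toNat = B := by omega
  rw [h1, h2, Finset.prod_range_succ']
  have hp : (∏ x ∈ Finset.range B,
      (q ^ (a - ((x + 1 : ℕ) : ℤ)) - 1) / (q ^ (((B : ℤ) + 1) - ((x + 1 : ℕ) : ℤ)) - 1)) =
      ∏ x ∈ Finset.range B, (q ^ ((a - 1) - (x : ℤ)) - 1) / (q ^ ((B : ℤ) - (x : ℤ)) - 1) := by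
    refine Finset.prod_congr rfl fun x _ => ?_
    push_cast
    ring_nf
  rw [hp]
  norm_num [mul_comm]

lemma gbinom_col {q : ℝ} (hq : 1 < q) : ∀ (B : ℕ) (a : ℤ), (B : ℤ) < a →
    gbinom q a B = (q ^ a - 1) / (q ^ (a - B) - 1) * gbinom q (a - 1) B := by
  intro B
  induction B with
  | zero =>
    intro a ha
    rw [show ((0:ℕ):ℤ) = 0 from rfl, gbinom_zero (by omega), gbinom_zero (by omega)]
    have h := zpow_sub_one_pos hq (show (1:ℤ) ≤ a by omega)
    rw [sub_zero]
    field_simp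
  | succ B ih =>
    intro a ha
    have hc : ((B + 1 : ℕ) : ℤ) = (B : ℤ) + 1 := by push_cast; ring
    rw [hc] at ha ⊢
    rw [gbinom_row a (by omega), gbinom_row (a - 1) (by omega), ih (a - 1) (by omega)]
    have h1 : a - 1 - (B : ℤ) = a - ((B : ℤ) + 1) := by ring
    have h2 : a - 1 - 1 = a - 2 := by ring
    rw [h1, h2]
    ring

lemma gbinom_row' {q : ℝ} {a b : ℤ} (ha : 1 ≤ a) (hb : 1 ≤ b) :
    gbinom q a b = (q ^ a - 1) / (q ^ b - 1) * gbinom q (a - 1) (b - 1) := by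
  obtain ⟨B, rfl⟩ : ∃ B : ℕ, b = (B : ℤ) + 1 := ⟨(b - 1).toNat, by omega⟩
  simpa using gbinom_row a ha B

lemma gbinom_col' {q : ℝ} (hq : 1 < q) {a b : ℤ} (hb : 0 ≤ b) (hba : b < a) :
    gbinom q a b = (q ^ a - 1) / (q ^ (a - b) - 1) * gbinom q (a - 1) b := by
  obtain ⟨B, rfl⟩ : ∃ B : ℕ, b = (B : ℤ) := ⟨b.toNat, by omega⟩
  exact gbinom_col hq B a hba

lemma sq_helper (i : ℕ) (e : ℤ) (Q A B C : ℝ) (hQ : 0 ≤ Q) (hB : 0 ≤ B) (hC : 0 ≤ C) :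
    ((-1:ℝ) ^ i * Real.sqrt Q ^ e * A * Real.sqrt B * (Real.sqrt C)⁻¹) ^ 2 =
      Q ^ e * A ^ 2 * B * C⁻¹ := by
  have hsq : (Real.sqrt Q ^ e) ^ 2 = Q ^ e := by
    rw [← zpow_natCast (Real.sqrt Q ^ e) 2, ← zpow_mul, mul_comm, zpow_mul,
      zpow_natCast, Real.sq_sqrt hQ]
  have hneg : ((-1:ℝ) ^ i) ^ 2 = 1 := by
    rw [← pow_mul, mul_comm i 2, pow_mul, neg_one_sq, one_pow]
  rw [mul_pow, mul_pow, mul_pow, mul_pow, inv_pow, Real.sq_sqrt hB, Real.sq_sqrt hC,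
    hsq, hneg, one_mul]

/-- **The ratio of consecutive eigenvalues.** For `1 ≤ ℓ < k ≤ n/2` and `2 ≤ i ≤ ℓ - 1`:
`(θ_{i+1}^{k,ℓ} / θ_i^{k,ℓ})² = q^{2i-k-ℓ}(q^{k-i}-1)(q^{ℓ-i}-1)/((q^{n-k-i}-1)(q^{n-ℓ-i}-1))`,
and this quantity is strictly less than `1`. -/
theorem theta_ratio_sq
    (q n k l : ℕ) (hq : IsPrimePow q)
    (hl1 : 1 ≤ l) (hlk : l < k) (hkn : 2 * k ≤ n)
    (i : ℕ) (hi2 : 2 ≤ i) (hil : i < l) :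
    (theta (q : ℝ) n (i + 1) k l / theta (q : ℝ) n i k l) ^ 2 =
      (q : ℝ) ^ ((2 * i : ℤ) - k - l) * ((q : ℝ) ^ ((k : ℤ) - i) - 1) *
        ((q : ℝ) ^ ((l : ℤ) - i) - 1) /
        (((q : ℝ) ^ ((n : ℤ) - k - i) - 1) * ((q : ℝ) ^ ((n : ℤ) - l - i) - 1)) ∧
    (q : ℝ) ^ ((2 * i : ℤ) - k - l) * ((q : ℝ) ^ ((k : ℤ) - i) - 1) *
        ((q : ℝ) ^ ((l : ℤ) - i) - 1) /
        (((q : ℝ) ^ ((n : ℤ) - k - i) - 1) * ((q : ℝ) ^ ((n : ℤ) - l - i) - 1)) < 1 := by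
  have hq2 : 2 ≤ q := hq.two_le
  have hQ2' : (2:ℝ) ≤ (q : ℝ) := by exact_mod_cast hq2
  set Q : ℝ := (q : ℝ) with hQdef
  have hQ2 : (2:ℝ) ≤ Q := hQ2'
  have hQ1 : (1:ℝ) < Q := by linarith
  have hQ0 : (0:ℝ) < Q := by linarith
  -- positivity of various `q^m - 1`
  have pne : ∀ m : ℤ, 1 ≤ m → Q ^ m - 1 ≠ 0 := fun m hm => (zpow_sub_one_pos hQ1 hm).ne'
  -- the square of theta
  have key : ∀ j : ℕ, j ≤ l →
      theta Q n j k l ^ 2 =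
        Q ^ ((j * (j - 1) : ℤ) + 2 * k * l - j * (k + l)) *
          gbinom Q ((n : ℤ) - k - j) ((l : ℤ) - j) ^ 2 *
          gbinom Q ((n : ℤ) - 2 * j) ((k : ℤ) - j) *
          (gbinom Q ((n : ℤ) - 2 * j) ((l : ℤ) - j))⁻¹ := by
    intro j hj
    have hc : j ≤ k ∧ k ≤ n - j := ⟨by omega, by omega⟩
    rw [theta, if_pos hc]
    exact sq_helper j _ Q _ _ _ hQ0.le
      (gbinom_pos hQ1 (by omega) (by omega)).le
      (gbinom_pos hQ1 (by omega) (by omega)).le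
  constructor
  · rw [div_pow, key i (by omega), key (i + 1) (by omega)]
    have harg1 : ((n : ℤ) - k - (i + 1 : ℕ)) = (n : ℤ) - k - i - 1 := by push_cast; ring
    have harg2 : ((l : ℤ) - (i + 1 : ℕ)) = (l : ℤ) - i - 1 := by push_cast; ring
    have harg3 : ((n : ℤ) - 2 * (i + 1 : ℕ)) = (n : ℤ) - 2 * i - 2 := by push_cast; ring
    have harg4 : ((k : ℤ) - (i + 1 : ℕ)) = (k : ℤ) - i - 1 := by push_cast; ring
    rw [harg1, harg2, harg3, harg4]
    have hee : (((i + 1 : ℕ) * ((i + 1 : ℕ) - 1) : ℤ) + 2 * k * l - (i + 1 : ℕ) * (k + l)) =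
        ((i * (i - 1) : ℤ) + 2 * k * l - i * (k + l)) + ((2 * i : ℤ) - k - l) := by
      push_cast; ring
    rw [hee, zpow_add₀ hQ0.ne']
    -- recursions
    have hA : gbinom Q ((n : ℤ) - k - i) ((l : ℤ) - i) =
        (Q ^ ((n : ℤ) - k - i) - 1) / (Q ^ ((l : ℤ) - i) - 1) *
          gbinom Q ((n : ℤ) - k - i - 1) ((l : ℤ) - i - 1) :=
      gbinom_row' (by omega) (by omega)
    have hB1 : gbinom Q ((n : ℤ) - 2 * i) ((k : ℤ) - i) =
        (Q ^ ((n : ℤ) - 2 * i) - 1) / (Q ^ ((k : ℤ) - i) - 1) *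
          gbinom Q ((n : ℤ) - 2 * i - 1) ((k : ℤ) - i - 1) :=
      gbinom_row' (by omega) (by omega)
    have hB2 : gbinom Q ((n : ℤ) - 2 * i - 1) ((k : ℤ) - i - 1) =
        (Q ^ ((n : ℤ) - 2 * i - 1) - 1) / (Q ^ ((n : ℤ) - k - i) - 1) *
          gbinom Q ((n : ℤ) - 2 * i - 2) ((k : ℤ) - i - 1) := by
      have h := gbinom_col' hQ1 (a := (n : ℤ) - 2 * i - 1) (b := (k : ℤ) - i - 1)
        (by omega) (by omega)
      rw [show ((n : ℤ) - 2 * i - 1) - ((k : ℤ) - i - 1) = (n : ℤ) - k - i by ring,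
        show (n : ℤ) - 2 * i - 1 - 1 = (n : ℤ) - 2 * i - 2 by ring] at h
      exact h
    have hC1 : gbinom Q ((n : ℤ) - 2 * i) ((l : ℤ) - i) =
        (Q ^ ((n : ℤ) - 2 * i) - 1) / (Q ^ ((l : ℤ) - i) - 1) *
          gbinom Q ((n : ℤ) - 2 * i - 1) ((l : ℤ) - i - 1) :=
      gbinom_row' (by omega) (by omega)
    have hC2 : gbinom Q ((n : ℤ) - 2 * i - 1) ((l : ℤ) - i - 1) =
        (Q ^ ((n : ℤ) - 2 * i - 1) - 1) / (Q ^ ((n : ℤ) - l - i) - 1) *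
          gbinom Q ((n : ℤ) - 2 * i - 2) ((l : ℤ) - i - 1) := by
      have h := gbinom_col' hQ1 (a := (n : ℤ) - 2 * i - 1) (b := (l : ℤ) - i - 1)
        (by omega) (by omega)
      rw [show ((n : ℤ) - 2 * i - 1) - ((l : ℤ) - i - 1) = (n : ℤ) - l - i by ring,
        show (n : ℤ) - 2 * i - 1 - 1 = (n : ℤ) - 2 * i - 2 by ring] at h
      exact h
    rw [hA, hB1, hB2, hC1, hC2]
    have hgA : gbinom Q ((n : ℤ) - k - i - 1) ((l : ℤ) - i - 1) ≠ 0 :=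
      (gbinom_pos hQ1 (by omega) (by omega)).ne'
    have hgB : gbinom Q ((n : ℤ) - 2 * i - 2) ((k : ℤ) - i - 1) ≠ 0 :=
      (gbinom_pos hQ1 (by omega) (by omega)).ne'
    have hgC : gbinom Q ((n : ℤ) - 2 * i - 2) ((l : ℤ) - i - 1) ≠ 0 :=
      (gbinom_pos hQ1 (by omega) (by omega)).ne'
    have hQe : Q ^ ((i * (i - 1) : ℤ) + 2 * k * l - i * (k + l)) ≠ 0 :=
      (zpow_pos hQ0 _).ne'
    have h1 := pne ((l : ℤ) - i) (by omega)
    have h2 := pne ((k : ℤ) - i) (by omega)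
    have h3 := pne ((n : ℤ) - k - i) (by omega)
    have h4 := pne ((n : ℤ) - l - i) (by omega)
    have h5 := pne ((n : ℤ) - 2 * i) (by omega)
    have h6 := pne ((n : ℤ) - 2 * i - 1) (by omega)
    field_simp
  · have h2 : (0:ℝ) < Q ^ ((k : ℤ) - i) - 1 := zpow_sub_one_pos hQ1 (by omega)
    have h1 : (0:ℝ) < Q ^ ((l : ℤ) - i) - 1 := zpow_sub_one_pos hQ1 (by omega)
    have h3 : (0:ℝ) < Q ^ ((n : ℤ) - k - i) - 1 := zpow_sub_one_pos hQ1 (by omega)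
    have h4 : (0:ℝ) < Q ^ ((n : ℤ) - l - i) - 1 := zpow_sub_one_pos hQ1 (by omega)
    have hd : (0:ℝ) < (Q ^ ((n : ℤ) - k - i) - 1) * (Q ^ ((n : ℤ) - l - i) - 1) :=
      mul_pos h3 h4
    -- denominator is at least 1
    have two_le : ∀ m : ℤ, 1 ≤ m → (2:ℝ) ≤ Q ^ m := by
      intro m hm
      calc (2:ℝ) ≤ Q := hQ2
      _ = Q ^ (1:ℤ) := (zpow_one Q).symm
      _ ≤ Q ^ m := zpow_le_zpow_right₀ hQ1.le hm
    have hd1 : (1:ℝ) ≤ (Q ^ ((n : ℤ) - k - i) - 1) * (Q ^ ((n : ℤ) - l - i) - 1) := by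
      have := two_le ((n : ℤ) - k - i) (by omega)
      have := two_le ((n : ℤ) - l - i) (by omega)
      nlinarith
    -- numerator is less than 1
    have hnum : Q ^ ((2 * i : ℤ) - k - l) * (Q ^ ((k : ℤ) - i) - 1) *
        (Q ^ ((l : ℤ) - i) - 1) < 1 := by
      have hz : Q ^ ((2 * i : ℤ) - k - l) * (Q ^ ((k : ℤ) - i) * Q ^ ((l : ℤ) - i)) = 1 := by
        rw [← zpow_add₀ hQ0.ne', ← zpow_add₀ hQ0.ne',
          show (2 * i : ℤ) - k - l + ((k : ℤ) - i + ((l : ℤ) - i)) = 0 by ring, zpow_zero]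
      have hp1 : (0:ℝ) < Q ^ ((2 * i : ℤ) - k - l) := zpow_pos hQ0 _
      have hlt : (Q ^ ((k : ℤ) - i) - 1) * (Q ^ ((l : ℤ) - i) - 1) <
          Q ^ ((k : ℤ) - i) * Q ^ ((l : ℤ) - i) := by
        have ha : (0:ℝ) < Q ^ ((k : ℤ) - i) := zpow_pos hQ0 _
        have hb : (0:ℝ) < Q ^ ((l : ℤ) - i) := zpow_pos hQ0 _
        nlinarith
      calc Q ^ ((2 * i : ℤ) - k - l) * (Q ^ ((k : ℤ) - i) - 1) * (Q ^ ((l : ℤ) - i) - 1)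
          = Q ^ ((2 * i : ℤ) - k - l) * ((Q ^ ((k : ℤ) - i) - 1) * (Q ^ ((l : ℤ) - i) - 1)) := by
            ring
        _ < Q ^ ((2 * i : ℤ) - k - l) * (Q ^ ((k : ℤ) - i) * Q ^ ((l : ℤ) - i)) := by
            exact (mul_lt_mul_iff_right₀ hp1).mpr hlt
        _ = 1 := hz
    exact (div_lt_one hd).mpr (hnum.trans_le hd1)
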